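/- Let q be a prime power with q > 4^r k^2 and r > k ≥ 2. Then there exist at least q^r - 4^r k^2 q^{r-1} > 0 vectors v ∈ F_q^r such that the r × q^k matrix F_q^{<k}[x,v] (columns indexed by polynomials f of degree < k, with column entries f(α_1),...,f(α_r)) is strongly 3-perfect hashing. -/

import Mathlib

open Polynomial Finset

set_option linter.unusedSectionVars false
set_option maxHeartbeats 1000000

open Module

section Aux
open Polynomial Finset Module

variable {F : Type*} [Field F] [Fintype F] [DecidableEq F]

/-- Greedy selection of evaluation points killing a finite-dimensional space. -/
private lemma killer {Y : Type*} [AddCommGroup Y] [Module F Y] [FiniteDimensional F Y]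
    (ev : F → (Y →ₗ[F] F)) (D : ℕ) :
    ∀ (n : ℕ) (U : Submodule F Y), finrank F U = n →
    (∀ y ∈ U, y ≠ 0 → ∃ Tb : Finset F, Tb.card ≤ D ∧ ∀ t : F, ev t y = 0 → t ∈ Tb) →
    ∀ (avoid : Finset F), D + n + avoid.card ≤ Fintype.card F →
    ∃ S : Finset F, S.card = n ∧ Disjoint S avoid ∧
      ∀ y ∈ U, (∀ s ∈ S, ev s y = 0) → y = 0 := by
  intro n
  induction n with
  | zero =>
    intro U hU _ avoid _
    refine ⟨∅, rfl, disjoint_empty_left _, ?_⟩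
    intro y hy _
    have : U = ⊥ := Submodule.finrank_eq_zero.mp hU
    simpa [this] using hy
  | succ n ih =>
    intro U hU hroots avoid hcard
    have hUne : U ≠ ⊥ := by
      intro h
      rw [h] at hU
      simp [finrank_bot] at hU
    obtain ⟨y₀, hy₀U, hy₀ne⟩ := Submodule.exists_mem_ne_zero_of_ne_bot hUne
    obtain ⟨Tb, hTbcard, hTb⟩ := hroots y₀ hy₀U hy₀ne
    -- pick a fresh point where ev t y₀ ≠ 0
    have hex : ((univ : Finset F) \ (Tb ∪ avoid)).Nonempty := by
      rw [← Finset.card_pos, Finset.card_sdiff_of_subset (Finset.subset_univ _)]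
      have h1 : (Tb ∪ avoid).card ≤ Tb.card + avoid.card := Finset.card_union_le _ _
      have h2 : Tb.card + avoid.card < Fintype.card F := by omega
      have : (Tb ∪ avoid).card < Fintype.card F := lt_of_le_of_lt h1 h2
      simp only [Finset.card_univ]
      omega
    obtain ⟨t, ht⟩ := hex
    rw [Finset.mem_sdiff, Finset.mem_union] at ht
    push_neg at ht
    obtain ⟨-, htTb, htavoid⟩ := ht
    have hty₀ : ev t y₀ ≠ 0 := fun h => htTb (hTb t h)
    -- the subspace of U killed additionally at t
    set f : ↥U →ₗ[F] F := (ev t).comp U.subtype with hf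
    have hfne : f ≠ 0 := by
      intro h
      apply hty₀
      have : f ⟨y₀, hy₀U⟩ = 0 := by rw [h]; rfl
      simpa [hf] using this
    have hrange : LinearMap.range f = ⊤ := by
      rcases eq_bot_or_eq_top (LinearMap.range f) with h | h
      · exfalso; apply hfne; rwa [← LinearMap.range_eq_bot]
      · exact h
    have hker : finrank F (LinearMap.ker f) = n := by
      have := LinearMap.finrank_range_add_finrank_ker f
      rw [hrange, finrank_top, hU] at this
      have hF : finrank F F = 1 := finrank_self F
      omega
    set U' : Submodule F Y := Submodule.map U.subtype (LinearMap.ker f) with hU'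
    have hU'rank : finrank F U' = n := by
      rw [hU', Submodule.finrank_map_subtype_eq]
      exact hker
    have hU'le : U' ≤ U := by
      rw [hU']
      intro y hy
      obtain ⟨z, _, rfl⟩ := hy
      exact z.2
    have hmemU' : ∀ y ∈ U, ev t y = 0 → y ∈ U' := by
      intro y hy hty
      exact ⟨⟨y, hy⟩, by simpa [hf] using hty, rfl⟩
    obtain ⟨S', hS'card, hS'disj, hS'kill⟩ := ih U' hU'rank
      (fun y hy hyne => hroots y (hU'le hy) hyne) (insert t avoid)
      (by
        rw [Finset.card_insert_of_notMem htavoid]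
        omega)
    have htS' : t ∉ S' := fun h =>
      (Finset.disjoint_left.mp hS'disj h) (Finset.mem_insert_self t avoid)
    refine ⟨insert t S', ?_, ?_, ?_⟩
    · rw [Finset.card_insert_of_notMem htS', hS'card]
    · rw [Finset.disjoint_left]
      intro a ha hav
      rcases Finset.mem_insert.mp ha with rfl | ha'
      · exact htavoid hav
      · exact (Finset.disjoint_left.mp hS'disj ha') (Finset.mem_insert_of_mem hav)
    · intro y hy hvan
      have h1 : ev t y = 0 := hvan t (Finset.mem_insert_self _ _)
      have h2 : y ∈ U' := hmemU' y hy h1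
      exact hS'kill y h2 (fun s hs => hvan s (Finset.mem_insert_of_mem hs))


private lemma mem_degreeLT_of_natDegree_le {p : F[X]} {D : ℕ} (h : p.natDegree ≤ D) :
    p ∈ degreeLT F (D + 1) := by
  rw [Polynomial.mem_degreeLT]
  calc degree p ≤ (p.natDegree : WithBot ℕ) := Polynomial.degree_le_natDegree
    _ ≤ (D : WithBot ℕ) := by exact_mod_cast h
    _ < ((D + 1 : ℕ) : WithBot ℕ) := by exact_mod_cast Nat.lt_succ_self D

private lemma natDegree_le_of_mem_degreeLT {p : F[X]} {D : ℕ} (h : p ∈ degreeLT F (D + 1)) :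
    p.natDegree ≤ D := by
  rw [Polynomial.mem_degreeLT] at h
  by_cases hp : p = 0
  · simp [hp]
  · have := (Polynomial.natDegree_lt_iff_degree_lt hp).mpr (by exact_mod_cast h)
    omega

private noncomputable instance (n : ℕ) : FiniteDimensional F ↥(degreeLT F n) :=
  Module.Finite.equiv (Polynomial.degreeLTEquiv F n).symm

private noncomputable def evalOn (D : ℕ) (S : Finset F) :
    ↥(degreeLT F (D + 1)) →ₗ[F] (↥S → F) where
  toFun := fun u s => (u : F[X]).eval (s : F)
  map_add' := by intro a b; funext s; simp
  map_smul' := by intro c a; funext s; simp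

private lemma evalOn_surjective (D : ℕ) (S : Finset F) (hS : S.card ≤ D + 1) :
    Function.Surjective (evalOn (F := F) D S) := by
  intro g
  set e := Lagrange.funEquivDegreeLT (F := F) (s := S) (v := id) (Set.injOn_id _) with he
  set f := e.symm g with hf
  have hmem : (f : F[X]) ∈ degreeLT F (D + 1) :=
    Polynomial.degreeLT_mono hS f.2
  refine ⟨⟨(f : F[X]), hmem⟩, ?_⟩
  have : e f = g := by rw [hf]; exact e.apply_symm_apply g
  funext s
  have h2 : e f s = (f : F[X]).eval (s : F) := rfl
  rw [← this]
  exact h2.symm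

private lemma exists_good_points (D n₁ n₂ n₃ : ℕ) (h1 : n₁ ≤ D) (h2 : n₂ ≤ D) (h3 : n₃ ≤ D)
    (hsum : n₁ + n₂ + n₃ = 2 * D + 2) (hqbig : 3 * D + 2 ≤ Fintype.card F) :
    ∃ S₁ S₂ S₃ : Finset F, S₁.card = n₁ ∧ S₂.card = n₂ ∧ S₃.card = n₃ ∧
      Disjoint S₁ S₂ ∧ Disjoint S₁ S₃ ∧ Disjoint S₂ S₃ ∧
      ∀ u w : F[X], u.natDegree ≤ D → w.natDegree ≤ D →
        (∀ x ∈ S₁, u.eval x = 0) → (∀ x ∈ S₂, (u + w).eval x = 0) →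
        (∀ x ∈ S₃, w.eval x = 0) → u = 0 ∧ w = 0 := by
  -- choose S₁ and S₃
  obtain ⟨T, -, hTcard⟩ := Finset.exists_subset_card_eq
    (show n₁ + n₃ ≤ (univ : Finset F).card by rw [Finset.card_univ]; omega)
  obtain ⟨S₁, hS₁T, hS₁card⟩ := Finset.exists_subset_card_eq
    (show n₁ ≤ T.card by omega)
  set S₃ := T \ S₁ with hS₃
  have hS₃card : S₃.card = n₃ := by
    rw [hS₃, Finset.card_sdiff_of_subset hS₁T]; omega
  have hd13 : Disjoint S₁ S₃ := Finset.disjoint_sdiff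
  -- the map L
  set L : (↥(degreeLT F (D + 1)) × ↥(degreeLT F (D + 1))) →ₗ[F] ((↥S₁ → F) × (↥S₃ → F)) :=
    LinearMap.prodMap (evalOn D S₁) (evalOn D S₃) with hL
  have hLsurj : Function.Surjective L := by
    intro g
    obtain ⟨u, hu⟩ := evalOn_surjective D S₁ (by omega) g.1
    obtain ⟨w, hw⟩ := evalOn_surjective D S₃ (by omega) g.2
    exact ⟨(u, w), Prod.ext hu hw⟩
  have hYrank : finrank F (↥(degreeLT F (D + 1)) × ↥(degreeLT F (D + 1))) = 2 * D + 2 := by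
    rw [Module.finrank_prod]
    have : finrank F ↥(degreeLT F (D + 1)) = D + 1 := by
      rw [(Polynomial.degreeLTEquiv F (D + 1)).finrank_eq, Module.finrank_fin_fun]
    omega
  have hUrank : finrank F (LinearMap.ker L) = n₂ := by
    have hrn := LinearMap.finrank_range_add_finrank_ker L
    rw [LinearMap.range_eq_top.mpr hLsurj, finrank_top, Module.finrank_prod] at hrn
    have hpi1 : finrank F (↥S₁ → F) = n₁ := by
      rw [Module.finrank_pi]; rw [Fintype.card_coe, hS₁card]
    have hpi3 : finrank F (↥S₃ → F) = n₃ := by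
      rw [Module.finrank_pi]; rw [Fintype.card_coe, hS₃card]
    rw [hpi1, hpi3, hYrank] at hrn
    omega
  -- facts about kernel elements
  have hkerfact : ∀ y : ↥(degreeLT F (D + 1)) × ↥(degreeLT F (D + 1)), y ∈ LinearMap.ker L → y ≠ 0 → (y.1 : F[X]) + (y.2 : F[X]) ≠ 0 := by
    intro y hyk hyne h0
    set u := (y.1 : F[X]) with hu
    set w := (y.2 : F[X]) with hw
    have hLy : L y = 0 := hyk
    have hv1 : ∀ x ∈ S₁, u.eval x = 0 := by
      intro x hx
      have := congrFun (congrArg Prod.fst hLy) ⟨x, hx⟩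
      exact this
    have hv3 : ∀ x ∈ S₃, w.eval x = 0 := by
      intro x hx
      have := congrFun (congrArg Prod.snd hLy) ⟨x, hx⟩
      exact this
    have huw : u = -w := by linear_combination h0
    have hune : u ≠ 0 := by
      intro h
      apply hyne
      have hw0 : w = 0 := by rw [huw] at h; simpa using h
      have : y.1 = 0 := Subtype.ext h
      have h2 : y.2 = 0 := Subtype.ext hw0
      exact Prod.ext this h2
    have hroots : S₁ ∪ S₃ ⊆ u.roots.toFinset := by
      intro x hx
      rw [Multiset.mem_toFinset, Polynomial.mem_roots hune]
      rcases Finset.mem_union.mp hx with h | h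
      · exact hv1 x h
      · show u.eval x = 0
        rw [huw, Polynomial.eval_neg, hv3 x h, neg_zero]
    have hcard : n₁ + n₃ ≤ u.natDegree := by
      calc n₁ + n₃ = (S₁ ∪ S₃).card := by
            rw [Finset.card_union_of_disjoint hd13, hS₁card, hS₃card]
        _ ≤ u.roots.toFinset.card := Finset.card_le_card hroots
        _ ≤ Multiset.card u.roots := Multiset.toFinset_card_le _
        _ ≤ u.natDegree := Polynomial.card_roots' u
    have hudeg : u.natDegree ≤ D := natDegree_le_of_mem_degreeLT y.1.2
    omega
  set ev : F → ((↥(degreeLT F (D + 1)) × ↥(degreeLT F (D + 1))) →ₗ[F] F) := fun t =>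
    { toFun := fun y => ((y.1 : F[X]) + (y.2 : F[X])).eval t
      map_add' := by
        intro a b
        simp only [Prod.fst_add, Prod.snd_add, Submodule.coe_add, Polynomial.eval_add]
        ring
      map_smul' := by
        intro c a
        simp only [Prod.smul_fst, Prod.smul_snd, SetLike.val_smul, RingHom.id_apply,
          smul_add, ← smul_add, Polynomial.eval_smul, smul_eq_mul] } with hev
  obtain ⟨S₂, hS₂card, hS₂disj, hS₂kill⟩ := killer ev D n₂ (LinearMap.ker L) hUrank
    (by
      intro y hy hyne
      refine ⟨((y.1 : F[X]) + (y.2 : F[X])).roots.toFinset, ?_, ?_⟩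
      · calc _ ≤ Multiset.card ((y.1 : F[X]) + (y.2 : F[X])).roots :=
              Multiset.toFinset_card_le _
          _ ≤ ((y.1 : F[X]) + (y.2 : F[X])).natDegree := Polynomial.card_roots' _
          _ ≤ D := by
              have h1 : (y.1 : F[X]).natDegree ≤ D := natDegree_le_of_mem_degreeLT y.1.2
              have h2 : (y.2 : F[X]).natDegree ≤ D := natDegree_le_of_mem_degreeLT y.2.2
              calc _ ≤ max (y.1 : F[X]).natDegree (y.2 : F[X]).natDegree :=
                    Polynomial.natDegree_add_le _ _
                _ ≤ D := by omega
      · intro t ht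
        rw [Multiset.mem_toFinset, Polynomial.mem_roots (hkerfact y hy hyne)]
        exact ht)
    (S₁ ∪ S₃)
    (by
      have : (S₁ ∪ S₃).card = n₁ + n₃ := by
        rw [Finset.card_union_of_disjoint hd13, hS₁card, hS₃card]
      omega)
  rw [Finset.disjoint_union_right] at hS₂disj
  refine ⟨S₁, S₂, S₃, hS₁card, hS₂card, hS₃card,
    hS₂disj.1.symm, hd13, hS₂disj.2, ?_⟩
  · intro u w hud hwd hv1 hv2 hv3
    set y : ↥(degreeLT F (D + 1)) × ↥(degreeLT F (D + 1)) :=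
      (⟨u, mem_degreeLT_of_natDegree_le hud⟩, ⟨w, mem_degreeLT_of_natDegree_le hwd⟩)
      with hy
    have hyk : y ∈ LinearMap.ker L := by
      rw [LinearMap.mem_ker, hL]
      refine Prod.ext ?_ ?_
      · funext s; exact hv1 s s.2
      · funext s; exact hv3 s s.2
    have := hS₂kill y hyk (fun s hs => hv2 s hs)
    constructor
    · have := congrArg (fun z => (z.1 : F[X])) this; simpa [hy] using this
    · have := congrArg (fun z => (z.2 : F[X])) this; simpa [hy] using this


variable {F : Type*} [Field F] [Fintype F] [DecidableEq F] {r : ℕ}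

private def patM (R : Type*) [CommRing R] (D : ℕ) (C₁ C₂ C₃ : Finset (Fin r))
    (e : (Fin (D+1) ⊕ Fin (D+1)) ≃ ↥(C₁ ∪ C₂ ∪ C₃)) (x : Fin r → R) :
    Matrix (Fin (D+1) ⊕ Fin (D+1)) (Fin (D+1) ⊕ Fin (D+1)) R :=
  fun a b => Sum.elim
    (fun m : Fin (D+1) => if ((e a : Fin r) ∈ C₁ ∪ C₂) then x (e a) ^ (m : ℕ) else 0)
    (fun m : Fin (D+1) => if ((e a : Fin r) ∈ C₂ ∪ C₃) then x (e a) ^ (m : ℕ) else 0) b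

private def coeffVec {D : ℕ} (u w : F[X]) : (Fin (D+1) ⊕ Fin (D+1)) → F :=
  Sum.elim (fun m => u.coeff m) (fun m => w.coeff m)

private lemma evalsum {D : ℕ} (u : F[X]) (hu : u.natDegree ≤ D) (t : F) :
    ∑ m : Fin (D+1), (if True then t ^ (m:ℕ) else 0) * u.coeff m = u.eval t := by
  simp only [if_true]
  rw [eval_eq_sum_range' (n := D+1) (by omega)]
  rw [← Fin.sum_univ_eq_sum_range (fun m => u.coeff m * t ^ m) (D+1)]
  apply Finset.sum_congr rfl
  intro m _
  ring

private lemma evalsum' {D : ℕ} (u : F[X]) (hu : u.natDegree ≤ D) (t : F) :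
    ∑ m : Fin (D+1), t ^ (m:ℕ) * u.coeff m = u.eval t := by
  have := evalsum u hu t
  simpa using this

private lemma patM_mulVec {D : ℕ} {C₁ C₂ C₃ : Finset (Fin r)}
    (hd12 : Disjoint C₁ C₂) (hd13 : Disjoint C₁ C₃) (hd23 : Disjoint C₂ C₃)
    (e : (Fin (D+1) ⊕ Fin (D+1)) ≃ ↥(C₁ ∪ C₂ ∪ C₃)) (x : Fin r → F)
    (u w : F[X]) (hud : u.natDegree ≤ D) (hwd : w.natDegree ≤ D)
    (a : Fin (D+1) ⊕ Fin (D+1)) :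
    (patM F D C₁ C₂ C₃ e x).mulVec (coeffVec u w) a =
      if ((e a : Fin r) ∈ C₁) then u.eval (x (e a))
      else if ((e a : Fin r) ∈ C₂) then (u + w).eval (x (e a))
      else w.eval (x (e a)) := by
  have hmem : (e a : Fin r) ∈ C₁ ∪ C₂ ∪ C₃ := (e a).2
  set i : Fin r := (e a : Fin r) with hi
  rw [Matrix.mulVec, dotProduct, Fintype.sum_sum_type]
  by_cases h1 : i ∈ C₁
  · have h2 : i ∉ C₂ := Finset.disjoint_left.mp hd12 h1
    have h3 : i ∉ C₃ := Finset.disjoint_left.mp hd13 h1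
    simp only [patM, coeffVec, Sum.elim_inl, Sum.elim_inr, ← hi, Finset.mem_union, h1, h2, h3,
      if_true, if_false, true_or, or_false, false_or, or_true]
    rw [evalsum' u hud (x (e a : Fin r))]
    simp [hi]
  · by_cases h2 : i ∈ C₂
    · have h3 : i ∉ C₃ := Finset.disjoint_left.mp hd23 h2
      simp only [patM, coeffVec, Sum.elim_inl, Sum.elim_inr, ← hi, Finset.mem_union, h1, h2, h3,
        if_true, if_false, true_or, or_false, false_or, or_true]
      rw [evalsum' u hud (x (e a : Fin r)), evalsum' w hwd (x (e a : Fin r))]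
      simp [Polynomial.eval_add, hi]
    · have h3 : i ∈ C₃ := by
        rcases Finset.mem_union.mp hmem with h | h
        · rcases Finset.mem_union.mp h with h' | h'
          · exact absurd h' h1
          · exact absurd h' h2
        · exact h
      simp only [patM, coeffVec, Sum.elim_inl, Sum.elim_inr, ← hi, Finset.mem_union, h1, h2, h3,
        if_true, if_false, true_or, or_false, false_or, or_true]
      rw [evalsum' w hwd (x (e a : Fin r))]
      simp [hi]

private lemma patM_det_eval_zero {D : ℕ} {C₁ C₂ C₃ : Finset (Fin r)}
    (hd12 : Disjoint C₁ C₂) (hd13 : Disjoint C₁ C₃) (hd23 : Disjoint C₂ C₃)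
    (e : (Fin (D+1) ⊕ Fin (D+1)) ≃ ↥(C₁ ∪ C₂ ∪ C₃)) (x : Fin r → F)
    (u w : F[X]) (hnz : ¬(u = 0 ∧ w = 0)) (hud : u.natDegree ≤ D) (hwd : w.natDegree ≤ D)
    (h1 : ∀ i ∈ C₁, u.eval (x i) = 0) (h2 : ∀ i ∈ C₂, (u + w).eval (x i) = 0)
    (h3 : ∀ i ∈ C₃, w.eval (x i) = 0) :
    (patM F D C₁ C₂ C₃ e x).det = 0 := by
  apply Matrix.exists_mulVec_eq_zero_iff.mp
  refine ⟨coeffVec u w, ?_, ?_⟩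
  · intro h
    apply hnz
    constructor
    · apply Polynomial.ext
      intro m
      by_cases hm : m ≤ D
      · have := congrFun h (Sum.inl ⟨m, by omega⟩)
        simpa [coeffVec] using this
      · exact Polynomial.coeff_eq_zero_of_natDegree_lt (by omega)
    · apply Polynomial.ext
      intro m
      by_cases hm : m ≤ D
      · have := congrFun h (Sum.inr ⟨m, by omega⟩)
        simpa [coeffVec] using this
      · exact Polynomial.coeff_eq_zero_of_natDegree_lt (by omega)
  · funext a
    rw [patM_mulVec hd12 hd13 hd23 e x u w hud hwd a]
    by_cases hc1 : ((e a : Fin r) ∈ C₁)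
    · simp only [hc1, if_true]
      exact (h1 _ hc1).trans rfl
    · by_cases hc2 : ((e a : Fin r) ∈ C₂)
      · simp only [hc1, hc2, if_false, if_true]
        exact (h2 _ hc2).trans rfl
      · have hc3 : (e a : Fin r) ∈ C₃ := by
          have hmem : (e a : Fin r) ∈ C₁ ∪ C₂ ∪ C₃ := (e a).2
          rcases Finset.mem_union.mp hmem with h | h
          · rcases Finset.mem_union.mp h with h' | h'
            · exact absurd h' hc1
            · exact absurd h' hc2
          · exact h
        simp only [hc1, hc2, if_false]
        exact (h3 _ hc3).trans rfl

private lemma patM_det_totalDegree {D : ℕ} {C₁ C₂ C₃ : Finset (Fin r)}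
    (e : (Fin (D+1) ⊕ Fin (D+1)) ≃ ↥(C₁ ∪ C₂ ∪ C₃)) :
    (patM (MvPolynomial (Fin r) F) D C₁ C₂ C₃ e MvPolynomial.X).det.totalDegree
      ≤ D * (D + 1) := by
  rw [Matrix.det_apply']
  refine le_trans (MvPolynomial.totalDegree_finset_sum _ _) ?_
  apply Finset.sup_le
  intro σ _
  have hsign : ((Equiv.Perm.sign σ : ℤ) : MvPolynomial (Fin r) F)
      = MvPolynomial.C ((Equiv.Perm.sign σ : ℤ) : F) :=
    (map_intCast (MvPolynomial.C : F →+* MvPolynomial (Fin r) F) _).symm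
  refine le_trans (MvPolynomial.totalDegree_mul _ _) ?_
  rw [hsign, MvPolynomial.totalDegree_C, zero_add]
  refine le_trans (MvPolynomial.totalDegree_finset_prod _ _) ?_
  have hbound : ∀ b : Fin (D+1) ⊕ Fin (D+1),
      (patM (MvPolynomial (Fin r) F) D C₁ C₂ C₃ e MvPolynomial.X (σ b) b).totalDegree
        ≤ Sum.elim (fun m : Fin (D+1) => (m : ℕ)) (fun m : Fin (D+1) => (m : ℕ)) b := by
    intro b
    cases b with
    | inl m =>
      simp only [patM, Sum.elim_inl]
      split
      · rw [MvPolynomial.totalDegree_X_pow]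
      · simp
    | inr m =>
      simp only [patM, Sum.elim_inr]
      split
      · rw [MvPolynomial.totalDegree_X_pow]
      · simp
  refine le_trans (Finset.sum_le_sum (fun b _ => hbound b)) ?_
  rw [Fintype.sum_sum_type]
  have hsum : ∑ m : Fin (D+1), (m : ℕ) = ∑ i ∈ range (D+1), i :=
    Fin.sum_univ_eq_sum_range (fun i => i) (D+1)
  have hgauss : (∑ i ∈ range (D+1), i) * 2 = D * (D + 1) := by
    rw [Finset.sum_range_id_mul_two, Nat.add_sub_cancel, Nat.mul_comm]
  simp only [Sum.elim_inl, Sum.elim_inr, hsum]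
  omega

private lemma patM_det_ne_zero {D : ℕ} {C₁ C₂ C₃ : Finset (Fin r)}
    (hd12 : Disjoint C₁ C₂) (hd13 : Disjoint C₁ C₃) (hd23 : Disjoint C₂ C₃)
    (h1 : C₁.card ≤ D) (h2 : C₂.card ≤ D) (h3 : C₃.card ≤ D)
    (hsum : C₁.card + C₂.card + C₃.card = 2 * D + 2)
    (hqbig : 3 * D + 2 ≤ Fintype.card F)
    (e : (Fin (D+1) ⊕ Fin (D+1)) ≃ ↥(C₁ ∪ C₂ ∪ C₃)) :
    (patM (MvPolynomial (Fin r) F) D C₁ C₂ C₃ e MvPolynomial.X).det ≠ 0 := by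
  obtain ⟨S₁, S₂, S₃, hS₁card, hS₂card, hS₃card, hds12, hds13, hds23, hkill⟩ :=
    exists_good_points (F := F) D C₁.card C₂.card C₃.card h1 h2 h3 hsum hqbig
  set b₁ : ↥C₁ ≃ ↥S₁ := Finset.equivOfCardEq (by rw [hS₁card]) with hb₁
  set b₂ : ↥C₂ ≃ ↥S₂ := Finset.equivOfCardEq (by rw [hS₂card]) with hb₂
  set b₃ : ↥C₃ ≃ ↥S₃ := Finset.equivOfCardEq (by rw [hS₃card]) with hb₃
  set x : Fin r → F := fun i =>
    if h : i ∈ C₁ then (b₁ ⟨i, h⟩ : F)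
    else if h : i ∈ C₂ then (b₂ ⟨i, h⟩ : F)
    else if h : i ∈ C₃ then (b₃ ⟨i, h⟩ : F)
    else 0 with hx
  have hx1 : ∀ (i : Fin r) (h : i ∈ C₁), x i = (b₁ ⟨i, h⟩ : F) := by
    intro i h; rw [hx]; simp only [dif_pos h]
  have hx2 : ∀ (i : Fin r) (h : i ∈ C₂), x i = (b₂ ⟨i, h⟩ : F) := by
    intro i h
    have h1' : i ∉ C₁ := Finset.disjoint_right.mp hd12 h
    rw [hx]; simp only [dif_neg h1', dif_pos h]
  have hx3 : ∀ (i : Fin r) (h : i ∈ C₃), x i = (b₃ ⟨i, h⟩ : F) := by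
    intro i h
    have h1' : i ∉ C₁ := Finset.disjoint_right.mp hd13 h
    have h2' : i ∉ C₂ := Finset.disjoint_right.mp hd23 h
    rw [hx]; simp only [dif_neg h1', dif_neg h2', dif_pos h]
  intro hdet
  -- evaluate the determinant at x
  have hmapdet : (patM F D C₁ C₂ C₃ e x).det = 0 := by
    have hmap : (MvPolynomial.eval x : MvPolynomial (Fin r) F →+* F).mapMatrix
        (patM (MvPolynomial (Fin r) F) D C₁ C₂ C₃ e MvPolynomial.X) = patM F D C₁ C₂ C₃ e x := by
      apply Matrix.ext
      intro a b
      cases b with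
      | inl m =>
        simp only [patM, RingHom.mapMatrix_apply, Matrix.map_apply, Sum.elim_inl]
        split <;> simp
      | inr m =>
        simp only [patM, RingHom.mapMatrix_apply, Matrix.map_apply, Sum.elim_inr]
        split <;> simp
    rw [← hmap, ← RingHom.map_det, hdet, map_zero]
  obtain ⟨y, hyne, hymul⟩ := Matrix.exists_mulVec_eq_zero_iff.mpr hmapdet
  set u : F[X] := ∑ m : Fin (D+1), Polynomial.C (y (Sum.inl m)) * Polynomial.X ^ (m : ℕ) with hu
  set w : F[X] := ∑ m : Fin (D+1), Polynomial.C (y (Sum.inr m)) * Polynomial.X ^ (m : ℕ) with hw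
  have hud : u.natDegree ≤ D := by
    rw [hu]
    apply natDegree_sum_le_of_forall_le
    intro m _
    exact le_trans (Polynomial.natDegree_C_mul_X_pow_le _ _) (by omega)
  have hwd : w.natDegree ≤ D := by
    rw [hw]
    apply natDegree_sum_le_of_forall_le
    intro m _
    exact le_trans (Polynomial.natDegree_C_mul_X_pow_le _ _) (by omega)
  have hucoeff : ∀ m : Fin (D+1), u.coeff (m : ℕ) = y (Sum.inl m) := by
    intro m
    rw [hu, Polynomial.finset_sum_coeff]
    rw [Finset.sum_eq_single m]
    · simp
    · intro m' _ hne
      simp only [Polynomial.coeff_C_mul, Polynomial.coeff_X_pow]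
      rw [if_neg (fun h => hne (Fin.ext h.symm))]
      ring
    · intro h; exact absurd (Finset.mem_univ m) h
  have hwcoeff : ∀ m : Fin (D+1), w.coeff (m : ℕ) = y (Sum.inr m) := by
    intro m
    rw [hw, Polynomial.finset_sum_coeff]
    rw [Finset.sum_eq_single m]
    · simp
    · intro m' _ hne
      simp only [Polynomial.coeff_C_mul, Polynomial.coeff_X_pow]
      rw [if_neg (fun h => hne (Fin.ext h.symm))]
      ring
    · intro h; exact absurd (Finset.mem_univ m) h
  have hyeq : coeffVec u w = y := by
    funext b
    cases b with
    | inl m => exact hucoeff m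
    | inr m => exact hwcoeff m
  -- read off the vanishing conditions
  have hrow : ∀ i (h : i ∈ C₁ ∪ C₂ ∪ C₃),
      (if (i ∈ C₁) then u.eval (x i)
      else if (i ∈ C₂) then (u + w).eval (x i)
      else w.eval (x i)) = 0 := by
    intro i h
    have := congrFun hymul (e.symm ⟨i, h⟩)
    rw [← hyeq] at this
    rw [patM_mulVec hd12 hd13 hd23 e x u w hud hwd (e.symm ⟨i, h⟩)] at this
    rw [e.apply_symm_apply] at this
    exact this
  have hv1 : ∀ s ∈ S₁, u.eval s = 0 := by
    intro s hs
    set c := b₁.symm ⟨s, hs⟩ with hc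
    have hcm : (c : Fin r) ∈ C₁ := c.2
    have hxc : x (c : Fin r) = s := by
      rw [hx1 _ hcm]
      have : (⟨(c : Fin r), hcm⟩ : ↥C₁) = c := rfl
      rw [this, hc, b₁.apply_symm_apply]
    have := hrow (c : Fin r) (Finset.mem_union_left _ (Finset.mem_union_left _ hcm))
    rw [if_pos hcm, hxc] at this
    exact this
  have hv2 : ∀ s ∈ S₂, (u + w).eval s = 0 := by
    intro s hs
    set c := b₂.symm ⟨s, hs⟩ with hc
    have hcm : (c : Fin r) ∈ C₂ := c.2
    have hc1 : (c : Fin r) ∉ C₁ := Finset.disjoint_right.mp hd12 hcm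
    have hxc : x (c : Fin r) = s := by
      rw [hx2 _ hcm]
      have : (⟨(c : Fin r), hcm⟩ : ↥C₂) = c := rfl
      rw [this, hc, b₂.apply_symm_apply]
    have := hrow (c : Fin r) (Finset.mem_union_left _ (Finset.mem_union_right _ hcm))
    rw [if_neg hc1, if_pos hcm, hxc] at this
    exact this
  have hv3 : ∀ s ∈ S₃, w.eval s = 0 := by
    intro s hs
    set c := b₃.symm ⟨s, hs⟩ with hc
    have hcm : (c : Fin r) ∈ C₃ := c.2
    have hc1 : (c : Fin r) ∉ C₁ := Finset.disjoint_right.mp hd13 hcm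
    have hc2 : (c : Fin r) ∉ C₂ := Finset.disjoint_right.mp hd23 hcm
    have hxc : x (c : Fin r) = s := by
      rw [hx3 _ hcm]
      have : (⟨(c : Fin r), hcm⟩ : ↥C₃) = c := rfl
      rw [this, hc, b₃.apply_symm_apply]
    have := hrow (c : Fin r) (Finset.mem_union_right _ hcm)
    rw [if_neg hc1, if_neg hc2, hxc] at this
    exact this
  obtain ⟨hu0, hw0⟩ := hkill u w hud hwd hv1 hv2 hv3
  apply hyne
  rw [← hyeq, hu0, hw0]
  funext b
  cases b with
  | inl m => simp [coeffVec]
  | inr m => simp [coeffVec]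

open Polynomial Finset

private lemma roots_filter_card_le {F : Type*} [Field F] [Fintype F] [DecidableEq F]
    (p : F[X]) (hp : p ≠ 0) :
    (univ.filter fun y : F => p.eval y = 0).card ≤ p.natDegree := by
  have h1 : (univ.filter fun y : F => p.eval y = 0) ⊆ p.roots.toFinset := by
    intro y hy
    simp only [mem_filter] at hy
    simpa [Multiset.mem_toFinset, mem_roots hp] using hy.2
  calc (univ.filter fun y : F => p.eval y = 0).card ≤ p.roots.toFinset.card :=
        card_le_card h1
    _ ≤ Multiset.card p.roots := Multiset.toFinset_card_le _
    _ ≤ p.natDegree := card_roots' p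

private lemma sz_mul {F : Type*} [Field F] [Fintype F] [DecidableEq F] :
    ∀ (n : ℕ) (p : MvPolynomial (Fin n) F), p ≠ 0 →
    (univ.filter fun v : Fin n → F => MvPolynomial.eval v p = 0).card * Fintype.card F
      ≤ p.totalDegree * Fintype.card F ^ n := by
  intro n
  induction n with
  | zero =>
    intro p hp
    obtain ⟨c, rfl⟩ := MvPolynomial.C_surjective (Fin 0) p
    have hc : c ≠ 0 := fun h => hp (by rw [h, map_zero])
    simp [hc]
  | succ n ih =>
    intro p hp
    set q := Fintype.card F with hqdef
    set P := MvPolynomial.finSuccEquiv F n p with hP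
    have hPne : P ≠ 0 := by
      rw [hP]
      exact (map_ne_zero_iff _ (AlgEquiv.injective _)).mpr hp
    set dP := P.natDegree with hdP
    set lead := P.coeff dP with hlead
    have hleadne : lead ≠ 0 := Polynomial.leadingCoeff_ne_zero.mpr hPne
    have key : ∀ s : Fin n → F,
        (univ.filter fun y : F => MvPolynomial.eval (Fin.cons y s) p = 0).card ≤
          if MvPolynomial.eval s lead = 0 then q else dP := by
      intro s
      by_cases hs : MvPolynomial.eval s lead = 0
      · simp only [hs, if_true]
        calc _ ≤ (univ : Finset F).card := card_le_card (filter_subset _ _)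
          _ = q := rfl
      · simp only [hs, if_false]
        set Q := Polynomial.map (MvPolynomial.eval s) P with hQ
        have hQcoeff : Q.coeff dP ≠ 0 := by
          rw [hQ, Polynomial.coeff_map]; exact hs
        have hQne : Q ≠ 0 := fun h => hQcoeff (by simp [h])
        have heq : ∀ y : F, MvPolynomial.eval (Fin.cons y s) p = Q.eval y := by
          intro y; rw [hQ, hP]; exact MvPolynomial.eval_eq_eval_mv_eval' s y p
        have hsub : (univ.filter fun y : F => MvPolynomial.eval (Fin.cons y s) p = 0)
            = (univ.filter fun y : F => Q.eval y = 0) := by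
          apply filter_congr; intro y _; rw [heq]
        rw [hsub]
        calc (univ.filter fun y : F => Q.eval y = 0).card ≤ Q.natDegree :=
              roots_filter_card_le Q hQne
          _ ≤ dP := Polynomial.natDegree_map_le
    -- rewrite the zero set as a sum over tails
    set T := univ.filter fun z : (Fin n → F) × F => MvPolynomial.eval (Fin.cons z.2 z.1) p = 0
      with hT
    have hcard1 : (univ.filter fun v : Fin (n+1) → F => MvPolynomial.eval v p = 0).card
        = T.card := by
      apply Finset.card_bij' (fun v _ => (Fin.tail v, v 0)) (fun z _ => Fin.cons z.2 z.1)
        (fun v hv => by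
          simp only [hT, mem_filter, mem_univ, true_and] at hv ⊢
          rwa [Fin.cons_self_tail])
        (fun z hz => by
          simp only [hT, mem_filter, mem_univ, true_and] at hz ⊢
          exact hz)
        (fun v _ => Fin.cons_self_tail v)
        (fun z _ => by simp)
    have hcard2 : T.card = ∑ s : Fin n → F,
        (univ.filter fun y : F => MvPolynomial.eval (Fin.cons y s) p = 0).card := by
      rw [card_eq_sum_card_fiberwise (f := Prod.fst) (t := univ) (fun x _ => mem_univ _)]
      apply Finset.sum_congr rfl
      intro s _
      apply Finset.card_bij' (fun z _ => z.2) (fun y _ => (s, y))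
        (fun z hz => by
          simp only [hT, mem_filter, filter_filter, mem_univ, true_and] at hz ⊢
          obtain ⟨h1, h2⟩ := hz
          rw [← h2]; exact h1)
        (fun y hy => by
          simp only [hT, mem_filter, filter_filter, mem_univ, true_and] at hy ⊢
          exact ⟨hy, trivial⟩)
        (fun z hz => by
          simp only [hT, mem_filter, filter_filter, mem_univ, true_and] at hz
          exact Prod.ext hz.2.symm rfl)
        (fun y _ => rfl)
    set Bad := univ.filter fun s : Fin n → F => MvPolynomial.eval s lead = 0 with hBad
    have hsum : (univ.filter fun v : Fin (n+1) → F => MvPolynomial.eval v p = 0).card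
        ≤ Bad.card * q + dP * q ^ n := by
      rw [hcard1, hcard2]
      calc ∑ s : Fin n → F, (univ.filter fun y : F =>
              MvPolynomial.eval (Fin.cons y s) p = 0).card
          ≤ ∑ s : Fin n → F, (if MvPolynomial.eval s lead = 0 then q else dP) :=
            Finset.sum_le_sum (fun s _ => key s)
        _ ≤ ∑ s : Fin n → F, ((if MvPolynomial.eval s lead = 0 then q else 0) + dP) := by
            apply Finset.sum_le_sum; intro s _
            by_cases hs : MvPolynomial.eval s lead = 0 <;> simp [hs]
        _ = (∑ s : Fin n → F, (if MvPolynomial.eval s lead = 0 then q else 0))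
            + dP * q ^ n := by
            rw [Finset.sum_add_distrib]
            congr 1
            rw [Finset.sum_const, smul_eq_mul, Finset.card_univ, Fintype.card_fun,
              Fintype.card_fin, mul_comm]
        _ = Bad.card * q + dP * q ^ n := by
            congr 1
            rw [hBad, ← Finset.sum_filter, Finset.sum_const, smul_eq_mul]
    have hbadcard : Bad.card * q ≤ lead.totalDegree * q ^ n := ih lead hleadne
    have hdeg : lead.totalDegree + dP ≤ p.totalDegree :=
      MvPolynomial.totalDegree_coeff_finSuccEquiv_add_le p dP hleadne
    calc (univ.filter fun v : Fin (n+1) → F => MvPolynomial.eval v p = 0).card * q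
        ≤ (Bad.card * q + dP * q ^ n) * q := Nat.mul_le_mul_right q hsum
      _ = Bad.card * q * q + dP * q ^ (n+1) := by ring
      _ ≤ lead.totalDegree * q ^ n * q + dP * q ^ (n+1) := by
          exact Nat.add_le_add_right (Nat.mul_le_mul_right q hbadcard) _
      _ = (lead.totalDegree + dP) * q ^ (n+1) := by ring
      _ ≤ p.totalDegree * q ^ (n+1) := Nat.mul_le_mul_right _ hdeg

private lemma sz_count {F : Type*} [Field F] [Fintype F] [DecidableEq F] {r : ℕ} (hr : 1 ≤ r)
    (p : MvPolynomial (Fin r) F) (hp : p ≠ 0) :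
    (univ.filter fun v : Fin r → F => MvPolynomial.eval v p = 0).card
      ≤ p.totalDegree * Fintype.card F ^ (r - 1) := by
  have hq : 0 < Fintype.card F := Fintype.card_pos
  have h := sz_mul r p hp
  have hpow : Fintype.card F ^ r = Fintype.card F ^ (r - 1) * Fintype.card F := by
    rw [← pow_succ]
    congr 1
    omega
  rw [hpow, ← mul_assoc] at h
  exact Nat.le_of_mul_le_mul_right h hq


/-- Solvability predicate for a pattern. -/
private def Solv (D : ℕ) (C₁ C₂ C₃ : Finset (Fin r)) (v : Fin r → F) : Prop :=
  ∃ u w : F[X], ¬(u = 0 ∧ w = 0) ∧ u.natDegree ≤ D ∧ w.natDegree ≤ D ∧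
    (∀ i ∈ C₁, u.eval (v i) = 0) ∧ (∀ i ∈ C₂, (u + w).eval (v i) = 0) ∧
    (∀ i ∈ C₃, w.eval (v i) = 0)

private lemma count_pattern
    (hr : 1 ≤ r) {D : ℕ} {C₁ C₂ C₃ : Finset (Fin r)}
    (hd12 : Disjoint C₁ C₂) (hd13 : Disjoint C₁ C₃) (hd23 : Disjoint C₂ C₃)
    (h1 : C₁.card ≤ D) (h2 : C₂.card ≤ D) (h3 : C₃.card ≤ D)
    (hsum : C₁.card + C₂.card + C₃.card = 2 * D + 2)
    (hqbig : 3 * D + 2 ≤ Fintype.card F) :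
    ∀ [inst : DecidablePred fun v : Fin r → F => Solv D C₁ C₂ C₃ v],
    (univ.filter fun v : Fin r → F => Solv D C₁ C₂ C₃ v).card
      ≤ D * (D + 1) * Fintype.card F ^ (r - 1) := by
  intro inst
  classical
  have hcards : Fintype.card (Fin (D+1) ⊕ Fin (D+1)) = Fintype.card ↥(C₁ ∪ C₂ ∪ C₃) := by
    rw [Fintype.card_sum, Fintype.card_fin, Fintype.card_coe]
    rw [Finset.card_union_of_disjoint, Finset.card_union_of_disjoint hd12]
    · omega
    · rw [Finset.disjoint_union_left]
      exact ⟨hd13, hd23⟩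
  set e := Fintype.equivOfCardEq hcards with he
  set P := (patM (MvPolynomial (Fin r) F) D C₁ C₂ C₃ e MvPolynomial.X).det with hP
  have hPne : P ≠ 0 := patM_det_ne_zero hd12 hd13 hd23 h1 h2 h3 hsum hqbig e
  have hsubset : (univ.filter fun v : Fin r → F => Solv D C₁ C₂ C₃ v)
      ⊆ (univ.filter fun v : Fin r → F => MvPolynomial.eval v P = 0) := by
    intro v hv
    rw [Finset.mem_filter] at hv ⊢
    obtain ⟨-, u, w, hnz, hud, hwd, hv1, hv2, hv3⟩ := hv
    refine ⟨Finset.mem_univ _, ?_⟩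
    have hmap : (MvPolynomial.eval v : MvPolynomial (Fin r) F →+* F).mapMatrix
        (patM (MvPolynomial (Fin r) F) D C₁ C₂ C₃ e MvPolynomial.X)
          = patM F D C₁ C₂ C₃ e v := by
      apply Matrix.ext
      intro a b
      cases b with
      | inl m =>
        simp only [patM, RingHom.mapMatrix_apply, Matrix.map_apply, Sum.elim_inl]
        split <;> simp
      | inr m =>
        simp only [patM, RingHom.mapMatrix_apply, Matrix.map_apply, Sum.elim_inr]
        split <;> simp
    rw [hP, RingHom.map_det, hmap]
    exact patM_det_eval_zero hd12 hd13 hd23 e v u w hnz hud hwd hv1 hv2 hv3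
  calc (univ.filter fun v : Fin r → F => Solv D C₁ C₂ C₃ v).card
      ≤ (univ.filter fun v : Fin r → F => MvPolynomial.eval v P = 0).card :=
        Finset.card_le_card hsubset
    _ ≤ P.totalDegree * Fintype.card F ^ (r - 1) := sz_count hr P hPne
    _ ≤ D * (D + 1) * Fintype.card F ^ (r - 1) :=
        Nat.mul_le_mul_right _ (patM_det_totalDegree e)

private lemma noninj_card (hr : 1 ≤ r) :
    ∀ [inst : DecidablePred fun v : Fin r → F => ¬ Function.Injective v],
    (univ.filter fun v : Fin r → F => ¬ Function.Injective v).card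
      ≤ r * r * Fintype.card F ^ (r - 1) := by
  intro inst
  classical
  have hsub : (univ.filter fun v : Fin r → F => ¬ Function.Injective v)
      ⊆ (univ.offDiag.biUnion fun p : Fin r × Fin r =>
          univ.filter fun v : Fin r → F => v p.1 = v p.2) := by
    intro v hv
    rw [Finset.mem_filter] at hv
    obtain ⟨-, hni⟩ := hv
    rw [Function.not_injective_iff] at hni
    obtain ⟨i, j, hij, hne⟩ := hni
    rw [Finset.mem_biUnion]
    exact ⟨(i, j), Finset.mem_offDiag.mpr ⟨mem_univ _, mem_univ _, hne⟩,
      Finset.mem_filter.mpr ⟨mem_univ _, hij⟩⟩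
  have hpair : ∀ (i j : Fin r), i ≠ j →
      (univ.filter fun v : Fin r → F => v i = v j).card ≤ Fintype.card F ^ (r - 1) := by
    intro i j hij
    have : (univ.filter fun v : Fin r → F => v i = v j).card
        ≤ (univ : Finset ({x : Fin r // x ≠ j} → F)).card := by
      apply Finset.card_le_card_of_injOn
        (fun (v : Fin r → F) (x : {x : Fin r // x ≠ j}) => v (x : Fin r))
        (fun _ _ => mem_univ _)
      intro a ha b hb hab
      simp only [Finset.coe_filter, Set.mem_setOf_eq] at ha hb
      funext x
      by_cases hx : x = j
      · subst hx
        have h1 : a i = b i := congrFun hab ⟨i, hij⟩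
        rw [← ha.2, ← hb.2]
        exact h1
      · exact congrFun hab ⟨x, hx⟩
    refine le_trans this ?_
    rw [Finset.card_univ, Fintype.card_fun]
    have hcard : Fintype.card {x : Fin r // x ≠ j} = r - 1 := by
      have h := Fintype.card_subtype_compl (fun x : Fin r => x = j)
      simpa [Fintype.card_subtype_eq] using h
    rw [hcard]
  refine le_trans (le_trans (Finset.card_le_card hsub) Finset.card_biUnion_le) ?_
  refine le_trans (Finset.sum_le_sum
    (fun p hp => hpair p.1 p.2 (Finset.mem_offDiag.mp hp).2.2)) ?_
  rw [Finset.sum_const, smul_eq_mul]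
  apply Nat.mul_le_mul_right
  refine le_trans (Finset.card_le_card (fun p _ => mem_univ p)) ?_
  rw [Finset.card_univ]
  simp [Fintype.card_prod]


private lemma derive_pattern {k : ℕ} (hk : 2 ≤ k) (v : Fin r → F)
    (hinj : Function.Injective v)
    (f₁ f₂ f₃ : F[X]) (hdeg1 : f₁.natDegree < k) (hdeg2 : f₂.natDegree < k)
    (hdeg3 : f₃.natDegree < k)
    (hne12 : f₁ ≠ f₂) (hne13 : f₁ ≠ f₃) (hne23 : f₂ ≠ f₃)
    (hbad : ((univ.filter (fun i : Fin r =>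
              f₁.eval (v i) ≠ f₂.eval (v i) ∧ f₁.eval (v i) ≠ f₃.eval (v i) ∧
              f₂.eval (v i) ≠ f₃.eval (v i))).card : ℤ)
        ≤ (r : ℤ) - 2 * k +
            ((univ.filter (fun i : Fin r =>
              f₁.eval (v i) = f₂.eval (v i) ∧ f₂.eval (v i) = f₃.eval (v i))).card : ℤ)) :
    ∃ (C₁ C₂ C₃ : Finset (Fin r)) (D : ℕ), D + 1 ≤ k ∧
      Disjoint C₁ C₂ ∧ Disjoint C₁ C₃ ∧ Disjoint C₂ C₃ ∧
      C₁.card ≤ D ∧ C₂.card ≤ D ∧ C₃.card ≤ D ∧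
      C₁.card + C₂.card + C₃.card = 2 * D + 2 ∧
      Solv D C₁ C₂ C₃ v := by
  classical
  set g₁ := f₁ - f₂ with hg₁
  set g₂ := f₁ - f₃ with hg₂
  set g₃ := f₂ - f₃ with hg₃
  have hg₁ne : g₁ ≠ 0 := sub_ne_zero.mpr hne12
  have hg₂ne : g₂ ≠ 0 := sub_ne_zero.mpr hne13
  have hg₃ne : g₃ ≠ 0 := sub_ne_zero.mpr hne23
  have hg₂eq : g₂ = g₁ + g₃ := by rw [hg₁, hg₂, hg₃]; ring
  have hgdeg1 : g₁.natDegree ≤ k - 1 := by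
    refine le_trans (Polynomial.natDegree_sub_le f₁ f₂) ?_
    exact max_le (by omega) (by omega)
  have hgdeg2 : g₂.natDegree ≤ k - 1 := by
    refine le_trans (Polynomial.natDegree_sub_le f₁ f₃) ?_
    exact max_le (by omega) (by omega)
  have hgdeg3 : g₃.natDegree ≤ k - 1 := by
    refine le_trans (Polynomial.natDegree_sub_le f₂ f₃) ?_
    exact max_le (by omega) (by omega)
  set h := EuclideanDomain.gcd g₁ g₂ with hh
  have hhne : h ≠ 0 := by
    rw [hh]
    intro h0
    exact hg₁ne (EuclideanDomain.gcd_eq_zero_iff.mp h0).1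
  have hdvd1 : h ∣ g₁ := EuclideanDomain.gcd_dvd_left _ _
  have hdvd2 : h ∣ g₂ := EuclideanDomain.gcd_dvd_right _ _
  have hdvd3 : h ∣ g₃ := by
    have : g₃ = g₂ - g₁ := by rw [hg₂eq]; ring
    rw [this]
    exact dvd_sub hdvd2 hdvd1
  set d := h.natDegree with hd
  have hdk : d ≤ k - 1 := le_trans (Polynomial.natDegree_le_of_dvd hdvd1 hg₁ne) hgdeg1
  set D := k - 1 - d with hD
  -- the reduced polynomials
  set G₁ := g₁ / h with hG₁
  set G₂ := g₂ / h with hG₂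
  set G₃ := g₃ / h with hG₃
  have hfac1 : g₁ = h * G₁ := (EuclideanDomain.mul_div_cancel' hhne hdvd1).symm
  have hfac2 : g₂ = h * G₂ := (EuclideanDomain.mul_div_cancel' hhne hdvd2).symm
  have hfac3 : g₃ = h * G₃ := (EuclideanDomain.mul_div_cancel' hhne hdvd3).symm
  have hG₁ne : G₁ ≠ 0 := fun h0 => hg₁ne (by rw [hfac1, h0, mul_zero])
  have hG₂ne : G₂ ≠ 0 := fun h0 => hg₂ne (by rw [hfac2, h0, mul_zero])
  have hG₃ne : G₃ ≠ 0 := fun h0 => hg₃ne (by rw [hfac3, h0, mul_zero])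
  have hGdeg1 : G₁.natDegree ≤ D := by
    have := Polynomial.natDegree_mul hhne hG₁ne
    rw [← hfac1] at this
    omega
  have hGdeg2 : G₂.natDegree ≤ D := by
    have := Polynomial.natDegree_mul hhne hG₂ne
    rw [← hfac2] at this
    omega
  have hGdeg3 : G₃.natDegree ≤ D := by
    have := Polynomial.natDegree_mul hhne hG₃ne
    rw [← hfac3] at this
    omega
  have hGsum : G₂ = G₁ + G₃ := by
    apply mul_left_cancel₀ hhne
    rw [← hfac2, mul_add, ← hfac1, ← hfac3, hg₂eq]
  -- the row sets
  set Iset := univ.filter (fun i : Fin r =>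
    f₁.eval (v i) = f₂.eval (v i) ∧ f₂.eval (v i) = f₃.eval (v i)) with hIset
  set Sset := univ.filter (fun i : Fin r =>
    f₁.eval (v i) ≠ f₂.eval (v i) ∧ f₁.eval (v i) ≠ f₃.eval (v i) ∧
    f₂.eval (v i) ≠ f₃.eval (v i)) with hSset
  set B₁ := univ.filter (fun i : Fin r =>
    f₁.eval (v i) = f₂.eval (v i) ∧ f₁.eval (v i) ≠ f₃.eval (v i)) with hB₁
  set B₂ := univ.filter (fun i : Fin r =>
    f₁.eval (v i) = f₃.eval (v i) ∧ f₁.eval (v i) ≠ f₂.eval (v i)) with hB₂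
  set B₃ := univ.filter (fun i : Fin r =>
    f₂.eval (v i) = f₃.eval (v i) ∧ f₁.eval (v i) ≠ f₂.eval (v i)) with hB₃
  -- covering
  have hcover : (univ : Finset (Fin r)) ⊆ Iset ∪ Sset ∪ (B₁ ∪ B₂ ∪ B₃) := by
    intro i _
    simp only [hIset, hSset, hB₁, hB₂, hB₃, Finset.mem_union, Finset.mem_filter,
      Finset.mem_univ, true_and]
    by_cases hab : f₁.eval (v i) = f₂.eval (v i)
    · by_cases hbc : f₂.eval (v i) = f₃.eval (v i)
      · exact Or.inl (Or.inl ⟨hab, hbc⟩)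
      · have hac : f₁.eval (v i) ≠ f₃.eval (v i) := fun h0 => hbc (hab.symm.trans h0)
        exact Or.inr (Or.inl (Or.inl ⟨hab, hac⟩))
    · by_cases hac : f₁.eval (v i) = f₃.eval (v i)
      · exact Or.inr (Or.inl (Or.inr ⟨hac, hab⟩))
      · by_cases hbc : f₂.eval (v i) = f₃.eval (v i)
        · exact Or.inr (Or.inr ⟨hbc, hab⟩)
        · exact Or.inl (Or.inr ⟨hab, hac, hbc⟩)
  -- disjointness of the B sets
  have hdisj12 : Disjoint B₁ B₂ := by
    rw [Finset.disjoint_left]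
    intro i h1 h2
    simp only [hB₁, hB₂, Finset.mem_filter] at h1 h2
    exact h2.2.2 h1.2.1
  have hdisj13 : Disjoint B₁ B₃ := by
    rw [Finset.disjoint_left]
    intro i h1 h2
    simp only [hB₁, hB₃, Finset.mem_filter] at h1 h2
    exact h2.2.2 h1.2.1
  have hdisj23 : Disjoint B₂ B₃ := by
    rw [Finset.disjoint_left]
    intro i h1 h2
    simp only [hB₂, hB₃, Finset.mem_filter] at h1 h2
    exact h2.2.2 (h1.2.1.trans h2.2.1.symm)
  -- roots facts
  have heval1 : ∀ x : F, g₁.eval x = f₁.eval x - f₂.eval x := by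
    intro x; rw [hg₁, Polynomial.eval_sub]
  have heval2 : ∀ x : F, g₂.eval x = f₁.eval x - f₃.eval x := by
    intro x; rw [hg₂, Polynomial.eval_sub]
  have heval3 : ∀ x : F, g₃.eval x = f₂.eval x - f₃.eval x := by
    intro x; rw [hg₃, Polynomial.eval_sub]
  have hroot1 : ∀ i ∈ B₁, G₁.eval (v i) = 0 := by
    intro i hi
    simp only [hB₁, Finset.mem_filter] at hi
    have hg1z : g₁.eval (v i) = 0 := by rw [heval1, sub_eq_zero]; exact hi.2.1
    have hg2nz : g₂.eval (v i) ≠ 0 := by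
      rw [heval2, sub_ne_zero]; exact hi.2.2
    have hhnz : h.eval (v i) ≠ 0 := by
      intro h0
      apply hg2nz
      rw [hfac2, Polynomial.eval_mul, h0, zero_mul]
    rw [hfac1, Polynomial.eval_mul] at hg1z
    rcases mul_eq_zero.mp hg1z with h0 | h0
    · exact absurd h0 hhnz
    · exact h0
  have hroot2 : ∀ i ∈ B₂, G₂.eval (v i) = 0 := by
    intro i hi
    simp only [hB₂, Finset.mem_filter] at hi
    have hg2z : g₂.eval (v i) = 0 := by rw [heval2, sub_eq_zero]; exact hi.2.1
    have hg1nz : g₁.eval (v i) ≠ 0 := by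
      rw [heval1, sub_ne_zero]; exact hi.2.2
    have hhnz : h.eval (v i) ≠ 0 := by
      intro h0
      apply hg1nz
      rw [hfac1, Polynomial.eval_mul, h0, zero_mul]
    rw [hfac2, Polynomial.eval_mul] at hg2z
    rcases mul_eq_zero.mp hg2z with h0 | h0
    · exact absurd h0 hhnz
    · exact h0
  have hroot3 : ∀ i ∈ B₃, G₃.eval (v i) = 0 := by
    intro i hi
    simp only [hB₃, Finset.mem_filter] at hi
    have hg3z : g₃.eval (v i) = 0 := by rw [heval3, sub_eq_zero]; exact hi.2.1
    have hg1nz : g₁.eval (v i) ≠ 0 := by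
      rw [heval1, sub_ne_zero]; exact hi.2.2
    have hhnz : h.eval (v i) ≠ 0 := by
      intro h0
      apply hg1nz
      rw [hfac1, Polynomial.eval_mul, h0, zero_mul]
    rw [hfac3, Polynomial.eval_mul] at hg3z
    rcases mul_eq_zero.mp hg3z with h0 | h0
    · exact absurd h0 hhnz
    · exact h0
  -- card bounds
  have hrootscard : ∀ (p : F[X]), p ≠ 0 → ∀ (B : Finset (Fin r)),
      (∀ i ∈ B, p.eval (v i) = 0) → B.card ≤ p.natDegree := by
    intro p hp B hB
    calc B.card ≤ p.roots.toFinset.card := by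
          apply Finset.card_le_card_of_injOn v
          · intro i hi
            rw [Finset.mem_coe, Multiset.mem_toFinset, Polynomial.mem_roots hp]
            exact hB i hi
          · exact hinj.injOn
      _ ≤ Multiset.card p.roots := Multiset.toFinset_card_le _
      _ ≤ p.natDegree := Polynomial.card_roots' p
  have hB₁card : B₁.card ≤ D := le_trans (hrootscard G₁ hG₁ne B₁ hroot1) hGdeg1
  have hB₂card : B₂.card ≤ D := le_trans (hrootscard G₂ hG₂ne B₂ hroot2) hGdeg2
  have hB₃card : B₃.card ≤ D := le_trans (hrootscard G₃ hG₃ne B₃ hroot3) hGdeg3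
  have hIcard : Iset.card ≤ d := by
    refine le_trans (hrootscard h hhne Iset ?_) (le_refl d)
    intro i hi
    simp only [hIset, Finset.mem_filter] at hi
    have hg1z : g₁.eval (v i) = 0 := by rw [heval1, sub_eq_zero]; exact hi.2.1
    have hg3z : g₃.eval (v i) = 0 := by rw [heval3, sub_eq_zero]; exact hi.2.2
    have hg2z : g₂.eval (v i) = 0 := by
      rw [hg₂eq, Polynomial.eval_add, hg1z, hg3z, add_zero]
    have hbez := EuclideanDomain.gcd_eq_gcd_ab g₁ g₂
    rw [hh]
    calc (EuclideanDomain.gcd g₁ g₂).eval (v i)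
        = (g₁ * EuclideanDomain.gcdA g₁ g₂ + g₂ * EuclideanDomain.gcdB g₁ g₂).eval (v i) := by
          rw [← hbez]
      _ = 0 := by
          rw [Polynomial.eval_add, Polynomial.eval_mul, Polynomial.eval_mul, hg1z, hg2z]
          ring
  -- count
  have hcardsum : r ≤ Iset.card + Sset.card + (B₁.card + B₂.card + B₃.card) := by
    have h0 : (univ : Finset (Fin r)).card ≤ (Iset ∪ Sset ∪ (B₁ ∪ B₂ ∪ B₃)).card :=
      Finset.card_le_card hcover
    rw [Finset.card_univ, Fintype.card_fin] at h0
    refine le_trans h0 ?_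
    calc (Iset ∪ Sset ∪ (B₁ ∪ B₂ ∪ B₃)).card
        ≤ (Iset ∪ Sset).card + (B₁ ∪ B₂ ∪ B₃).card := Finset.card_union_le _ _
      _ ≤ Iset.card + Sset.card + (B₁ ∪ B₂ ∪ B₃).card := by
          have := Finset.card_union_le Iset Sset
          omega
      _ ≤ Iset.card + Sset.card + (B₁.card + B₂.card + B₃.card) := by
          have h1 := Finset.card_union_le (B₁ ∪ B₂) B₃
          have h2 := Finset.card_union_le B₁ B₂
          have h3 : B₁ ∪ B₂ ∪ B₃ = B₁ ∪ (B₂ ∪ B₃) := Finset.union_assoc _ _ _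
          have h4 := Finset.card_union_le B₁ (B₂ ∪ B₃)
          have h5 := Finset.card_union_le B₂ B₃
          rw [h3]
          omega
  have hbad' : Sset.card + 2 * k ≤ r + Iset.card := by
    have hcast : (Sset.card : ℤ) ≤ (r : ℤ) - 2 * k + (Iset.card : ℤ) := hbad
    omega
  have hEbig : 2 * D + 2 ≤ B₁.card + B₂.card + B₃.card := by
    have hIk : Iset.card ≤ d := hIcard
    omega
  -- choose the subsets
  obtain ⟨c₁, c₂, c₃, hc₁, hc₂, hc₃, hcsum⟩ :
      ∃ c₁ c₂ c₃ : ℕ, c₁ ≤ B₁.card ∧ c₂ ≤ B₂.card ∧ c₃ ≤ B₃.card ∧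
        c₁ + c₂ + c₃ = 2 * D + 2 := by
    refine ⟨min B₁.card (2*D+2), min B₂.card (2*D+2 - min B₁.card (2*D+2)),
      2*D+2 - min B₁.card (2*D+2) - min B₂.card (2*D+2 - min B₁.card (2*D+2)), ?_, ?_, ?_, ?_⟩
      <;> omega
  obtain ⟨C₁, hC₁sub, hC₁card⟩ := Finset.exists_subset_card_eq hc₁
  obtain ⟨C₂, hC₂sub, hC₂card⟩ := Finset.exists_subset_card_eq hc₂
  obtain ⟨C₃, hC₃sub, hC₃card⟩ := Finset.exists_subset_card_eq hc₃
  have hDk : D + 1 ≤ k := by omega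
  refine ⟨C₁, C₂, C₃, D, hDk, ?_, ?_, ?_, ?_, ?_, ?_, ?_, ?_⟩
  · exact Finset.disjoint_of_subset_left hC₁sub (Finset.disjoint_of_subset_right hC₂sub hdisj12)
  · exact Finset.disjoint_of_subset_left hC₁sub (Finset.disjoint_of_subset_right hC₃sub hdisj13)
  · exact Finset.disjoint_of_subset_left hC₂sub (Finset.disjoint_of_subset_right hC₃sub hdisj23)
  · omega
  · omega
  · omega
  · omega
  · refine ⟨G₁, G₃, ?_, hGdeg1, hGdeg3, ?_, ?_, ?_⟩
    · intro h0; exact hG₁ne h0.1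
    · intro i hi; exact hroot1 i (hC₁sub hi)
    · intro i hi
      rw [← hGsum]
      exact hroot2 i (hC₂sub hi)
    · intro i hi; exact hroot3 i (hC₃sub hi)

end Aux

/-- For q > 4^r k^2 there exist at least q^r - 4^r k^2 q^{r-1} > 0 vectors
v ∈ F_q^r for which the evaluation matrix of polynomials of degree < k is
strongly 3-perfect hashing. -/
theorem strongly_perfect_hashing_exists (F : Type*) [Field F] [Fintype F]
    [DecidableEq F] (q r k : ℕ) (hq : Fintype.card F = q)
    (hk : 2 ≤ k) (hrk : k < r) (hqlarge : 4 ^ r * k ^ 2 < q) :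
    0 < q ^ r - 4 ^ r * k ^ 2 * q ^ (r - 1) ∧
    q ^ r - 4 ^ r * k ^ 2 * q ^ (r - 1) ≤
      {v : Fin r → F | ∀ f₁ f₂ f₃ : F[X],
        f₁.natDegree < k → f₂.natDegree < k → f₃.natDegree < k →
        f₁ ≠ f₂ → f₁ ≠ f₃ → f₂ ≠ f₃ →
        (r : ℤ) - 2 * k +
            ((univ.filter (fun i : Fin r =>
              f₁.eval (v i) = f₂.eval (v i) ∧ f₂.eval (v i) = f₃.eval (v i))).card : ℤ)
          < ((univ.filter (fun i : Fin r =>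
              f₁.eval (v i) ≠ f₂.eval (v i) ∧ f₁.eval (v i) ≠ f₃.eval (v i) ∧
              f₂.eval (v i) ≠ f₃.eval (v i))).card : ℤ)}.ncard := by
  have hq0 : 0 < q := lt_of_le_of_lt (Nat.zero_le _) hqlarge
  have hr1 : 1 ≤ r := by omega
  have hpow : q ^ r = q ^ (r - 1) * q := by
    rw [← pow_succ]
    congr 1
    omega
  constructor
  · -- positivity
    have h1 : q ^ (r - 1) * (4 ^ r * k ^ 2) < q ^ (r - 1) * q :=
      Nat.mul_lt_mul_of_pos_left hqlarge (pow_pos hq0 _)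
    rw [mul_comm (q ^ (r - 1)) (4 ^ r * k ^ 2)] at h1
    omega
  · -- main counting
    classical
    rw [show {v : Fin r → F | ∀ f₁ f₂ f₃ : F[X],
        f₁.natDegree < k → f₂.natDegree < k → f₃.natDegree < k →
        f₁ ≠ f₂ → f₁ ≠ f₃ → f₂ ≠ f₃ →
        (r : ℤ) - 2 * k +
            ((univ.filter (fun i : Fin r =>
              f₁.eval (v i) = f₂.eval (v i) ∧ f₂.eval (v i) = f₃.eval (v i))).card : ℤ)
          < ((univ.filter (fun i : Fin r =>
              f₁.eval (v i) ≠ f₂.eval (v i) ∧ f₁.eval (v i) ≠ f₃.eval (v i) ∧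
              f₂.eval (v i) ≠ f₃.eval (v i))).card : ℤ)}
      = ↑(univ.filter (fun v : Fin r → F => ∀ f₁ f₂ f₃ : F[X],
        f₁.natDegree < k → f₂.natDegree < k → f₃.natDegree < k →
        f₁ ≠ f₂ → f₁ ≠ f₃ → f₂ ≠ f₃ →
        (r : ℤ) - 2 * k +
            ((univ.filter (fun i : Fin r =>
              f₁.eval (v i) = f₂.eval (v i) ∧ f₂.eval (v i) = f₃.eval (v i))).card : ℤ)
          < ((univ.filter (fun i : Fin r =>
              f₁.eval (v i) ≠ f₂.eval (v i) ∧ f₁.eval (v i) ≠ f₃.eval (v i) ∧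
              f₂.eval (v i) ≠ f₃.eval (v i))).card : ℤ))) from by ext v; simp,
      Set.ncard_coe_finset]
    set Pred : (Fin r → F) → Prop := fun v => ∀ f₁ f₂ f₃ : F[X],
        f₁.natDegree < k → f₂.natDegree < k → f₃.natDegree < k →
        f₁ ≠ f₂ → f₁ ≠ f₃ → f₂ ≠ f₃ →
        (r : ℤ) - 2 * k +
            ((univ.filter (fun i : Fin r =>
              f₁.eval (v i) = f₂.eval (v i) ∧ f₂.eval (v i) = f₃.eval (v i))).card : ℤ)
          < ((univ.filter (fun i : Fin r =>
              f₁.eval (v i) ≠ f₂.eval (v i) ∧ f₁.eval (v i) ≠ f₃.eval (v i) ∧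
              f₂.eval (v i) ≠ f₃.eval (v i))).card : ℤ) with hPred
    have hsplit := Finset.card_filter_add_card_filter_not
      (s := (univ : Finset (Fin r → F))) Pred
    have hcardF : (univ : Finset (Fin r → F)).card = q ^ r := by
      rw [Finset.card_univ, Fintype.card_fun, hq, Fintype.card_fin]
    -- it suffices to bound the bad set
    suffices hBad : (univ.filter (fun v : Fin r → F => ¬ Pred v)).card
        ≤ 4 ^ r * k ^ 2 * q ^ (r - 1) by
      have e1 : (univ.filter Pred).card + (univ.filter (fun v : Fin r → F => ¬ Pred v)).card
          = q ^ r := by rw [← hcardF]; exact hsplit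
      have e3 : q ^ r - (univ.filter (fun v : Fin r → F => ¬ Pred v)).card
          = (univ.filter Pred).card := Nat.sub_eq_of_eq_add e1.symm
      exact (Nat.sub_le_sub_left hBad _).trans_eq e3
    -- fibers of a labeling
    set fib : (Fin r → Fin 4) → Fin 4 → Finset (Fin r) :=
      fun κ j => univ.filter (fun i => κ i = j) with hfib
    set Zf : (Fin r → Fin 4) → Finset (Fin r → F) := fun κ =>
      univ.filter (fun v => ∃ D : ℕ, D + 1 ≤ k ∧
        (fib κ 1).card ≤ D ∧ (fib κ 2).card ≤ D ∧ (fib κ 3).card ≤ D ∧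
        (fib κ 1).card + (fib κ 2).card + (fib κ 3).card = 2 * D + 2 ∧
        Solv D (fib κ 1) (fib κ 2) (fib κ 3) v) with hZf
    -- inclusion
    have hinc : (univ.filter (fun v : Fin r → F => ¬ Pred v)) ⊆
        (univ.filter (fun v : Fin r → F => ¬ Function.Injective v)) ∪
          (univ : Finset (Fin r → Fin 4)).biUnion Zf := by
      intro v hv
      rw [Finset.mem_filter] at hv
      obtain ⟨-, hnp⟩ := hv
      by_cases hinj : Function.Injective v
      · apply Finset.mem_union_right
        simp only [hPred] at hnp
        push_neg at hnp
        obtain ⟨f₁, f₂, f₃, hd1, hd2, hd3, hne12, hne13, hne23, hbad⟩ := hnp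
        obtain ⟨C₁, C₂, C₃, D, hDk, hd12, hd13, hd23, h1, h2, h3, hsum, hsolv⟩ :=
          derive_pattern hk v hinj f₁ f₂ f₃ hd1 hd2 hd3 hne12 hne13 hne23 hbad
        set κ : Fin r → Fin 4 := fun i =>
          if i ∈ C₁ then 1 else if i ∈ C₂ then 2 else if i ∈ C₃ then 3 else 0 with hκ
        have hfib1 : fib κ 1 = C₁ := by
          ext i
          simp only [hfib, hκ, Finset.mem_filter, Finset.mem_univ, true_and]
          constructor
          · intro hi
            by_cases h1' : i ∈ C₁
            · exact h1'
            · exfalso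
              rw [if_neg h1'] at hi
              by_cases h2' : i ∈ C₂
              · rw [if_pos h2'] at hi; exact absurd hi (by decide)
              · rw [if_neg h2'] at hi
                by_cases h3' : i ∈ C₃
                · rw [if_pos h3'] at hi; exact absurd hi (by decide)
                · rw [if_neg h3'] at hi; exact absurd hi (by decide)
          · intro hi; rw [if_pos hi]
        have hfib2 : fib κ 2 = C₂ := by
          ext i
          simp only [hfib, hκ, Finset.mem_filter, Finset.mem_univ, true_and]
          constructor
          · intro hi
            by_cases h1' : i ∈ C₁
            · rw [if_pos h1'] at hi; exact absurd hi (by decide)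
            · rw [if_neg h1'] at hi
              by_cases h2' : i ∈ C₂
              · exact h2'
              · exfalso
                rw [if_neg h2'] at hi
                by_cases h3' : i ∈ C₃
                · rw [if_pos h3'] at hi; exact absurd hi (by decide)
                · rw [if_neg h3'] at hi; exact absurd hi (by decide)
          · intro hi
            have h1' : i ∉ C₁ := Finset.disjoint_right.mp hd12 hi
            rw [if_neg h1', if_pos hi]
        have hfib3 : fib κ 3 = C₃ := by
          ext i
          simp only [hfib, hκ, Finset.mem_filter, Finset.mem_univ, true_and]
          constructor
          · intro hi
            by_cases h1' : i ∈ C₁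
            · rw [if_pos h1'] at hi; exact absurd hi (by decide)
            · rw [if_neg h1'] at hi
              by_cases h2' : i ∈ C₂
              · rw [if_pos h2'] at hi; exact absurd hi (by decide)
              · rw [if_neg h2'] at hi
                by_cases h3' : i ∈ C₃
                · exact h3'
                · exfalso
                  rw [if_neg h3'] at hi; exact absurd hi (by decide)
          · intro hi
            have h1' : i ∉ C₁ := Finset.disjoint_right.mp hd13 hi
            have h2' : i ∉ C₂ := Finset.disjoint_right.mp hd23 hi
            rw [if_neg h1', if_neg h2', if_pos hi]
        rw [Finset.mem_biUnion]
        refine ⟨κ, Finset.mem_univ _, ?_⟩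
        rw [hZf, Finset.mem_filter]
        refine ⟨Finset.mem_univ _, D, hDk, ?_, ?_, ?_, ?_, ?_⟩
        · rw [hfib1]; exact h1
        · rw [hfib2]; exact h2
        · rw [hfib3]; exact h3
        · rw [hfib1, hfib2, hfib3]; exact hsum
        · rw [hfib1, hfib2, hfib3]; exact hsolv
      · apply Finset.mem_union_left
        rw [Finset.mem_filter]
        exact ⟨Finset.mem_univ _, hinj⟩
    -- per-pattern bound
    have h4r : 4 ≤ 4 ^ r := by
      calc 4 = 4 ^ 1 := by norm_num
        _ ≤ 4 ^ r := Nat.pow_le_pow_right (by norm_num) (by omega)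
    have hkk : k ≤ k * k := Nat.le_mul_of_pos_left k (by omega)
    have hk2 : k ^ 2 = k * k := by ring
    have h4kk : 4 * (k * k) < q := by
      calc 4 * (k * k) ≤ 4 ^ r * (k * k) := Nat.mul_le_mul_right _ h4r
        _ = 4 ^ r * k ^ 2 := by rw [hk2]
        _ < q := hqlarge
    have hZcard : ∀ κ : Fin r → Fin 4, (Zf κ).card ≤ (k * k - k) * q ^ (r - 1) := by
      intro κ
      by_cases hD : ∃ D : ℕ, D + 1 ≤ k ∧
          (fib κ 1).card ≤ D ∧ (fib κ 2).card ≤ D ∧ (fib κ 3).card ≤ D ∧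
          (fib κ 1).card + (fib κ 2).card + (fib κ 3).card = 2 * D + 2
      · obtain ⟨D, hDk, h1, h2, h3, hsum⟩ := hD
        have hdisj : ∀ (a b : Fin 4), a ≠ b → Disjoint (fib κ a) (fib κ b) := by
          intro a b hab
          rw [Finset.disjoint_left]
          intro i hia hib
          rw [hfib, Finset.mem_filter] at hia hib
          exact hab (hia.2.symm.trans hib.2)
        have hqbig3 : 3 * D + 2 ≤ Fintype.card F := by
          rw [hq]; omega
        have hsub : Zf κ ⊆ univ.filter
            (fun v : Fin r → F => Solv D (fib κ 1) (fib κ 2) (fib κ 3) v) := by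
          intro v hv
          rw [hZf, Finset.mem_filter] at hv
          obtain ⟨-, D₂, hD₂k, h1', h2', h3', hsum', hsolv⟩ := hv
          have : D₂ = D := by omega
          subst this
          rw [Finset.mem_filter]
          exact ⟨Finset.mem_univ _, hsolv⟩
        calc (Zf κ).card ≤ (univ.filter
              (fun v : Fin r → F => Solv D (fib κ 1) (fib κ 2) (fib κ 3) v)).card :=
              Finset.card_le_card hsub
          _ ≤ D * (D + 1) * Fintype.card F ^ (r - 1) :=
              count_pattern hr1 (hdisj 1 2 (by decide)) (hdisj 1 3 (by decide))
                (hdisj 2 3 (by decide)) h1 h2 h3 hsum hqbig3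
          _ ≤ (k * k - k) * q ^ (r - 1) := by
              rw [hq]
              apply Nat.mul_le_mul_right
              have hDle : D ≤ k - 1 := by omega
              have : (k - 1) * k = k * k - k := by
                rw [Nat.sub_mul, one_mul]
              calc D * (D + 1) ≤ (k - 1) * k := Nat.mul_le_mul (by omega) (by omega)
                _ = k * k - k := this
      · have hempty : Zf κ = ∅ := by
          rw [hZf]
          rw [Finset.filter_eq_empty_iff]
          intro v _
          intro hcontra
          obtain ⟨D, hDk, h1, h2, h3, hsum, -⟩ := hcontra
          exact hD ⟨D, hDk, h1, h2, h3, hsum⟩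
        rw [hempty]
        simp
    -- assemble
    have hnoninj : (univ.filter (fun v : Fin r → F => ¬ Function.Injective v)).card
        ≤ r * r * q ^ (r - 1) := by
      have := noninj_card (F := F) (r := r) hr1
      rw [hq] at this
      exact this
    have hcard4 : (univ : Finset (Fin r → Fin 4)).card = 4 ^ r := by
      rw [Finset.card_univ, Fintype.card_fun, Fintype.card_fin, Fintype.card_fin]
    calc (univ.filter (fun v : Fin r → F => ¬ Pred v)).card
        ≤ ((univ.filter (fun v : Fin r → F => ¬ Function.Injective v)) ∪
            (univ : Finset (Fin r → Fin 4)).biUnion Zf).card := Finset.card_le_card hinc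
      _ ≤ (univ.filter (fun v : Fin r → F => ¬ Function.Injective v)).card +
            ((univ : Finset (Fin r → Fin 4)).biUnion Zf).card := Finset.card_union_le _ _
      _ ≤ r * r * q ^ (r - 1) + ∑ κ : Fin r → Fin 4, (Zf κ).card :=
            Nat.add_le_add hnoninj Finset.card_biUnion_le
      _ ≤ r * r * q ^ (r - 1) + 4 ^ r * ((k * k - k) * q ^ (r - 1)) := by
            apply Nat.add_le_add_left
            calc ∑ κ : Fin r → Fin 4, (Zf κ).card
                ≤ (univ : Finset (Fin r → Fin 4)).card • ((k * k - k) * q ^ (r - 1)) :=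
                  Finset.sum_le_card_nsmul _ _ _ (fun κ _ => hZcard κ)
              _ = 4 ^ r * ((k * k - k) * q ^ (r - 1)) := by rw [hcard4, smul_eq_mul]
      _ ≤ 4 ^ r * k ^ 2 * q ^ (r - 1) := by
            have hrr : r * r ≤ 4 ^ r := by
              have h2r : r ≤ 2 ^ r := le_of_lt (Nat.lt_two_pow_self (n := r))
              calc r * r ≤ 2 ^ r * 2 ^ r := Nat.mul_le_mul h2r h2r
                _ = 4 ^ r := by rw [← Nat.mul_pow]
            have hk1 : k + 1 ≤ k * k := by
              have := Nat.mul_le_mul_right k hk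
              omega
            calc r * r * q ^ (r - 1) + 4 ^ r * ((k * k - k) * q ^ (r - 1))
                ≤ 4 ^ r * q ^ (r - 1) + 4 ^ r * ((k * k - k) * q ^ (r - 1)) :=
                  Nat.add_le_add_right (Nat.mul_le_mul_right _ hrr) _
              _ = 4 ^ r * ((1 + (k * k - k)) * q ^ (r - 1)) := by ring
              _ ≤ 4 ^ r * (k * k * q ^ (r - 1)) := by
                  apply Nat.mul_le_mul_left
                  apply Nat.mul_le_mul_right
                  omega
              _ = 4 ^ r * k ^ 2 * q ^ (r - 1) := by rw [hk2]; ring
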